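/- (Truth Lemma) Let I be the χ-canonical F-interpreted system for JTO_CS. For every formula ψ ∈ Subf⁺(χ), every run r in its set of runs, and every n ∈ ℕ: (I,r,n) ⊨ ψ iff ψ ∈ r(n). -/

import Mathlib

namespace JTO

/-- Epistemic justification terms. -/
inductive TmE (Const Var : Type) : Type
  | const : Const → TmE Const Var
  | var   : Var → TmE Const Var
  | bang  : TmE Const Var → TmE Const Var
  | plus  : TmE Const Var → TmE Const Var → TmE Const Var
  | times : TmE Const Var → TmE Const Var → TmE Const Var

/-- Deontic (normative) justification terms. -/
inductive TmO (Const Var : Type) : Type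
  | const : Const → TmO Const Var
  | var   : Var → TmO Const Var
  | ddag  : TmO Const Var → TmO Const Var
  | times : TmO Const Var → TmO Const Var → TmO Const Var

/-- Formulas of the logic JTO. -/
inductive Fm (Ag Const Var Atom : Type) : Type
  | atom  : Atom → Fm Ag Const Var Atom
  | bot   : Fm Ag Const Var Atom
  | imp   : Fm Ag Const Var Atom → Fm Ag Const Var Atom → Fm Ag Const Var Atom
  | next  : Fm Ag Const Var Atom → Fm Ag Const Var Atom
  | wprev : Fm Ag Const Var Atom → Fm Ag Const Var Atom
  | untl  : Fm Ag Const Var Atom → Fm Ag Const Var Atom → Fm Ag Const Var Atom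
  | snce  : Fm Ag Const Var Atom → Fm Ag Const Var Atom → Fm Ag Const Var Atom
  | jbox  : Ag → TmE Const Var → Fm Ag Const Var Atom → Fm Ag Const Var Atom
  | obox  : Ag → TmO Const Var → Fm Ag Const Var Atom → Fm Ag Const Var Atom

namespace Fm

variable {Ag Const Var Atom : Type}

/-- ¬φ := φ → ⊥ -/
def neg (φ : Fm Ag Const Var Atom) : Fm Ag Const Var Atom := φ.imp bot
/-- ⊤ := ¬⊥ -/
def top : Fm Ag Const Var Atom := neg bot
/-- φ ∨ ψ := ¬φ → ψ -/
def disj (φ ψ : Fm Ag Const Var Atom) : Fm Ag Const Var Atom := (neg φ).imp ψ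
/-- φ ∧ ψ := ¬(¬φ ∨ ¬ψ) -/
def conj (φ ψ : Fm Ag Const Var Atom) : Fm Ag Const Var Atom := neg (disj (neg φ) (neg ψ))
/-- φ ↔ ψ := (φ→ψ) ∧ (ψ→φ) -/
def biim (φ ψ : Fm Ag Const Var Atom) : Fm Ag Const Var Atom := conj (φ.imp ψ) (ψ.imp φ)
/-- strong previous ⊙ₛφ := ¬⊙_w¬φ -/
def sprev (φ : Fm Ag Const Var Atom) : Fm Ag Const Var Atom := neg (wprev (neg φ))
/-- eventually ◇φ := ⊤ U φ -/
def ev (φ : Fm Ag Const Var Atom) : Fm Ag Const Var Atom := untl top φ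
/-- always (henceforth) □φ := ¬◇¬φ -/
def alw (φ : Fm Ag Const Var Atom) : Fm Ag Const Var Atom := neg (ev (neg φ))
/-- once ◇⁻φ := ⊤ S φ -/
def once (φ : Fm Ag Const Var Atom) : Fm Ag Const Var Atom := snce top φ
/-- has-always-been □⁻φ := ¬◇⁻¬φ -/
def sofar (φ : Fm Ag Const Var Atom) : Fm Ag Const Var Atom := neg (once (neg φ))
/-- ⊡φ := □⁻φ ∧ □φ -/
def boxdot (φ : Fm Ag Const Var Atom) : Fm Ag Const Var Atom := conj (sofar φ) (alw φ)
/-- weak until (unless) φ W ψ := (φ U ψ) ∨ □φ -/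
def wuntl (φ ψ : Fm Ag Const Var Atom) : Fm Ag Const Var Atom := disj (untl φ ψ) (alw φ)
/-- permission P[s]ᵢφ := ¬O[s]ᵢ¬φ -/
def pbox (i : Ag) (t : TmO Const Var) (φ : Fm Ag Const Var Atom) : Fm Ag Const Var Atom :=
  neg (obox i t (neg φ))
/-- time = m, i.e. ⊙ₛ^m ⊙_w ⊥ -/
def timeEq : ℕ → Fm Ag Const Var Atom
  | 0 => wprev bot
  | m + 1 => sprev (timeEq m)
/-- true_m(φ) := ⊡(time=m → φ) -/
def trueAt (m : ℕ) (φ : Fm Ag Const Var Atom) : Fm Ag Const Var Atom :=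
  boxdot ((timeEq m).imp φ)

/-- Subformulas. -/
def subf : Fm Ag Const Var Atom → Set (Fm Ag Const Var Atom)
  | atom p => {atom p}
  | bot => {bot}
  | imp φ ψ => insert (imp φ ψ) (subf φ ∪ subf ψ)
  | next φ => insert (next φ) (subf φ)
  | wprev φ => insert (wprev φ) (subf φ)
  | untl φ ψ => insert (untl φ ψ) (subf φ ∪ subf ψ)
  | snce φ ψ => insert (snce φ ψ) (subf φ ∪ subf ψ)
  | jbox i t φ => insert (jbox i t φ) (subf φ)
  | obox i t φ => insert (obox i t φ) (subf φ)

/-- Subf⁺(χ) := A_χ ∪ {¬ψ : ψ ∈ A_χ}, with A_χ = Subf(χ) ∪ Subf(⊤ S ⊙_w⊥). -/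
def subfPlus (χ : Fm Ag Const Var Atom) : Set (Fm Ag Const Var Atom) :=
  (subf χ ∪ subf (snce top (wprev bot))) ∪ neg '' (subf χ ∪ subf (snce top (wprev bot)))

end Fm

variable {Ag Const Var Atom : Type}

/-- Propositional tautologies in the language of JTO. -/
def Taut (φ : Fm Ag Const Var Atom) : Prop :=
  ∀ v : Fm Ag Const Var Atom → Bool,
    v Fm.bot = false → (∀ a b, v (a.imp b) = (!(v a) || v b)) → v φ = true

/-- The axioms of JTO. -/
inductive IsAxiom : Fm Ag Const Var Atom → Prop
  | taut {φ : Fm Ag Const Var Atom} : Taut φ → IsAxiom φ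
  | nextK (φ ψ : Fm Ag Const Var Atom) :
      IsAxiom ((Fm.next (φ.imp ψ)).imp ((Fm.next φ).imp (Fm.next ψ)))
  | alwK (φ ψ : Fm Ag Const Var Atom) :
      IsAxiom ((Fm.alw (φ.imp ψ)).imp ((Fm.alw φ).imp (Fm.alw ψ)))
  | fn (φ : Fm Ag Const Var Atom) :
      IsAxiom (Fm.biim (Fm.next (Fm.neg φ)) (Fm.neg (Fm.next φ)))
  | ind (φ : Fm Ag Const Var Atom) :
      IsAxiom ((Fm.alw (φ.imp (Fm.next φ))).imp (φ.imp (Fm.alw φ)))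
  | untl1 (φ ψ : Fm Ag Const Var Atom) :
      IsAxiom ((Fm.untl φ ψ).imp (Fm.ev ψ))
  | untl2 (φ ψ : Fm Ag Const Var Atom) :
      IsAxiom (Fm.biim (Fm.untl φ ψ) (Fm.disj ψ (Fm.conj φ (Fm.next (Fm.untl φ ψ)))))
  | sofarK (φ ψ : Fm Ag Const Var Atom) :
      IsAxiom ((Fm.sofar (φ.imp ψ)).imp ((Fm.sofar φ).imp (Fm.sofar ψ)))
  | wprevK (φ ψ : Fm Ag Const Var Atom) :
      IsAxiom ((Fm.wprev (φ.imp ψ)).imp ((Fm.wprev φ).imp (Fm.wprev ψ)))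
  | sw (φ : Fm Ag Const Var Atom) : IsAxiom ((Fm.sprev φ).imp (Fm.wprev φ))
  | initial : IsAxiom (Fm.once (Fm.wprev (Fm.bot : Fm Ag Const Var Atom)))
  | sofarInd (φ : Fm Ag Const Var Atom) :
      IsAxiom ((Fm.sofar (φ.imp (Fm.wprev φ))).imp (φ.imp (Fm.sofar φ)))
  | snce1 (φ ψ : Fm Ag Const Var Atom) : IsAxiom ((Fm.snce φ ψ).imp (Fm.once ψ))
  | snce2 (φ ψ : Fm Ag Const Var Atom) :
      IsAxiom (Fm.biim (Fm.snce φ ψ) (Fm.disj ψ (Fm.conj φ (Fm.sprev (Fm.snce φ ψ)))))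
  | fp (φ : Fm Ag Const Var Atom) : IsAxiom (φ.imp (Fm.next (Fm.sprev φ)))
  | pf (φ : Fm Ag Const Var Atom) : IsAxiom (φ.imp (Fm.wprev (Fm.next φ)))
  | app (i : Ag) (t s : TmE Const Var) (φ ψ : Fm Ag Const Var Atom) :
      IsAxiom ((Fm.jbox i t (φ.imp ψ)).imp ((Fm.jbox i s φ).imp (Fm.jbox i (TmE.times t s) ψ)))
  | sum1 (i : Ag) (t s : TmE Const Var) (φ : Fm Ag Const Var Atom) :
      IsAxiom ((Fm.jbox i t φ).imp (Fm.jbox i (TmE.plus t s) φ))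
  | sum2 (i : Ag) (t s : TmE Const Var) (φ : Fm Ag Const Var Atom) :
      IsAxiom ((Fm.jbox i s φ).imp (Fm.jbox i (TmE.plus t s) φ))
  | fact (i : Ag) (t : TmE Const Var) (φ : Fm Ag Const Var Atom) :
      IsAxiom ((Fm.jbox i t φ).imp φ)
  | pos (i : Ag) (t : TmE Const Var) (φ : Fm Ag Const Var Atom) :
      IsAxiom ((Fm.jbox i t φ).imp (Fm.jbox i (TmE.bang t) (Fm.jbox i t φ)))
  | appO (i : Ag) (t s : TmO Const Var) (φ ψ : Fm Ag Const Var Atom) :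
      IsAxiom ((Fm.obox i t (φ.imp ψ)).imp ((Fm.obox i s φ).imp (Fm.obox i (TmO.times t s) ψ)))
  | noc (i : Ag) (t : TmO Const Var) (φ : Fm Ag Const Var Atom) :
      IsAxiom ((Fm.obox i t φ).imp (Fm.pbox i t φ))
  | ofact (i : Ag) (t : TmO Const Var) (φ : Fm Ag Const Var Atom) :
      IsAxiom (Fm.obox i (TmO.ddag t) ((Fm.obox i t φ).imp φ))

/-- Formulas of the shape [c_{j_n}]_{i_n} … [c_{j_1}]_{i_1} φ with φ an axiom instance, n ≥ 1. -/
inductive EIter : Fm Ag Const Var Atom → Prop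
  | base {i : Ag} {c : Const} {φ : Fm Ag Const Var Atom} :
      IsAxiom φ → EIter (Fm.jbox i (TmE.const c) φ)
  | step {i : Ag} {c : Const} {φ : Fm Ag Const Var Atom} :
      EIter φ → EIter (Fm.jbox i (TmE.const c) φ)

/-- Formulas of the shape O[c_{j_n}]_{i_n} … O[c_{j_1}]_{i_1} φ with φ an axiom instance, n ≥ 1. -/
inductive OIter : Fm Ag Const Var Atom → Prop
  | base {i : Ag} {c : Const} {φ : Fm Ag Const Var Atom} :
      IsAxiom φ → OIter (Fm.obox i (TmO.const c) φ)
  | step {i : Ag} {c : Const} {φ : Fm Ag Const Var Atom} :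
      OIter φ → OIter (Fm.obox i (TmO.const c) φ)

/-- A constant specification: a downward closed set of iterated constant-justification
assertions of axiom instances. -/
structure ConstSpec (Ag Const Var Atom : Type) where
  set : Set (Fm Ag Const Var Atom)
  shape : ∀ φ ∈ set, EIter φ ∨ OIter φ
  dcE : ∀ (i : Ag) (c : Const) (φ : Fm Ag Const Var Atom),
    Fm.jbox i (TmE.const c) φ ∈ set → EIter φ → φ ∈ set
  dcO : ∀ (i : Ag) (c : Const) (φ : Fm Ag Const Var Atom),
    Fm.obox i (TmO.const c) φ ∈ set → OIter φ → φ ∈ set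

/-- CS^E : the epistemic part of a constant specification. -/
def ConstSpec.csE (CS : ConstSpec Ag Const Var Atom) : Set (Fm Ag Const Var Atom) :=
  {φ ∈ CS.set | EIter φ}

/-- CS^O : the deontic part of a constant specification. -/
def ConstSpec.csO (CS : ConstSpec Ag Const Var Atom) : Set (Fm Ag Const Var Atom) :=
  {φ ∈ CS.set | OIter φ}

/-- Derivability in the Hilbert system JTO_CS. -/
inductive Deriv (CS : ConstSpec Ag Const Var Atom) : Fm Ag Const Var Atom → Prop
  | ax {φ : Fm Ag Const Var Atom} : IsAxiom φ → Deriv CS φ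
  | mp {φ ψ : Fm Ag Const Var Atom} : Deriv CS (φ.imp ψ) → Deriv CS φ → Deriv CS ψ
  | necNext {φ : Fm Ag Const Var Atom} : Deriv CS φ → Deriv CS (Fm.next φ)
  | necWPrev {φ : Fm Ag Const Var Atom} : Deriv CS φ → Deriv CS (Fm.wprev φ)
  | necAlw {φ : Fm Ag Const Var Atom} : Deriv CS φ → Deriv CS (Fm.alw φ)
  | necSofar {φ : Fm Ag Const Var Atom} : Deriv CS φ → Deriv CS (Fm.sofar φ)
  | csax {φ : Fm Ag Const Var Atom} : φ ∈ CS.set → Deriv CS φ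

/-- Conjunction of a list of formulas. -/
def conjList : List (Fm Ag Const Var Atom) → Fm Ag Const Var Atom
  | [] => Fm.top
  | φ :: l => Fm.conj φ (conjList l)

/-- T ⊢_CS φ iff ⊢_CS (ψ₁ ∧ … ∧ ψ_n) → φ for some ψ₁, …, ψ_n ∈ T. -/
def DerivFrom (CS : ConstSpec Ag Const Var Atom) (T : Set (Fm Ag Const Var Atom))
    (φ : Fm Ag Const Var Atom) : Prop :=
  ∃ L : List (Fm Ag Const Var Atom), (∀ ψ ∈ L, ψ ∈ T) ∧ Deriv CS ((conjList L).imp φ)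

/-- A set of formulas is consistent if it does not derive ⊥. -/
def Consistent (CS : ConstSpec Ag Const Var Atom) (T : Set (Fm Ag Const Var Atom)) : Prop :=
  ¬ DerivFrom CS T Fm.bot

end JTO
namespace JTO

variable {Ag Const Var Atom : Type}

/-- The data of an F-interpreted system (Fitting-style), without conditions. -/
structure FQuasi (Ag Const Var Atom S : Type) where
  R : Set (ℕ → S)
  K : Ag → S → S → Prop
  KO : Ag → S → S → Prop
  E : Ag → S → TmE Const Var → Set (Fm Ag Const Var Atom)
  EO : Ag → S → TmO Const Var → Set (Fm Ag Const Var Atom)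
  val : S → Set Atom

/-- Truth at a point (r, n) of an F-interpreted system. -/
def FQuasi.Sat {S : Type} (I : FQuasi Ag Const Var Atom S) :
    Fm Ag Const Var Atom → (ℕ → S) → ℕ → Prop
  | .atom p, r, n => p ∈ I.val (r n)
  | .bot, _, _ => False
  | .imp φ ψ, r, n => I.Sat φ r n → I.Sat ψ r n
  | .next φ, r, n => I.Sat φ r (n + 1)
  | .wprev φ, r, n => n = 0 ∨ I.Sat φ r (n - 1)
  | .untl φ ψ, r, n => ∃ m, n ≤ m ∧ I.Sat ψ r m ∧ ∀ k, n ≤ k → k < m → I.Sat φ r k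
  | .snce φ ψ, r, n => ∃ m, m ≤ n ∧ I.Sat ψ r m ∧ ∀ k, m < k → k ≤ n → I.Sat φ r k
  | .jbox i t φ, r, n =>
      φ ∈ I.E i (r n) t ∧ ∀ r' ∈ I.R, ∀ n' : ℕ, I.K i (r n) (r' n') → I.Sat φ r' n'
  | .obox i t φ, r, n =>
      φ ∈ I.EO i (r n) t ∧ ∀ r' ∈ I.R, ∀ n' : ℕ, I.KO i (r n) (r' n') → I.Sat φ r' n'

/-- An F-interpreted system for JTO_CS. -/
structure FIS (Ag Const Var Atom S : Type) (CS : ConstSpec Ag Const Var Atom)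
    extends FQuasi Ag Const Var Atom S where
  Sne : Nonempty S
  Rne : R.Nonempty
  Krefl : ∀ (i : Ag) (w : S), K i w w
  Ktrans : ∀ (i : Ag) (u v w : S), K i u v → K i v w → K i u w
  KOshift : ∀ (i : Ag) (w v : S), KO i w v → KO i v v
  Emono : ∀ (i : Ag) (v w : S) (t : TmE Const Var), K i v w → E i v t ⊆ E i w t
  Ecs : ∀ (i : Ag) (w : S) (t : TmE Const Var) (φ : Fm Ag Const Var Atom),
    Fm.jbox i t φ ∈ CS.csE → φ ∈ E i w t
  Eapp : ∀ (i : Ag) (w : S) (t s : TmE Const Var) (φ ψ : Fm Ag Const Var Atom),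
    φ.imp ψ ∈ E i w t → φ ∈ E i w s → ψ ∈ E i w (TmE.times t s)
  Epos : ∀ (i : Ag) (w : S) (t : TmE Const Var) (φ : Fm Ag Const Var Atom),
    φ ∈ E i w t → Fm.jbox i t φ ∈ E i w (TmE.bang t)
  EOcs : ∀ (i : Ag) (w : S) (t : TmO Const Var) (φ : Fm Ag Const Var Atom),
    Fm.obox i t φ ∈ CS.csO → φ ∈ EO i w t
  EOapp : ∀ (i : Ag) (w : S) (t s : TmO Const Var) (φ ψ : Fm Ag Const Var Atom),
    φ.imp ψ ∈ EO i w t → φ ∈ EO i w s → ψ ∈ EO i w (TmO.times t s)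
  EOcons : ∀ (i : Ag) (w : S) (t : TmO Const Var) (φ : Fm Ag Const Var Atom),
    φ ∈ EO i w t → Fm.neg φ ∉ EO i w t
  EOfact : ∀ (i : Ag) (w : S) (t : TmO Const Var) (φ : Fm Ag Const Var Atom),
    (Fm.obox i t φ).imp φ ∈ EO i w (TmO.ddag t)

/-- Truth at a point of an F-interpreted system. -/
abbrev FIS.Sat {S : Type} {CS : ConstSpec Ag Const Var Atom}
    (I : FIS Ag Const Var Atom S CS) :
    Fm Ag Const Var Atom → (ℕ → S) → ℕ → Prop :=
  I.toFQuasi.Sat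

/-- I ⊨ φ : truth at every point of the system. -/
def FIS.Valid {S : Type} {CS : ConstSpec Ag Const Var Atom}
    (I : FIS Ag Const Var Atom S CS) (φ : Fm Ag Const Var Atom) : Prop :=
  ∀ r ∈ I.R, ∀ n : ℕ, I.Sat φ r n

/-- ⊨_CS φ : validity in all F-interpreted systems for JTO_CS. -/
def FValid (CS : ConstSpec Ag Const Var Atom) (φ : Fm Ag Const Var Atom) : Prop :=
  ∀ (S : Type) (I : FIS Ag Const Var Atom S CS), I.Valid φ

/-- T ⊨_CS φ : the local consequence relation over F-interpreted systems. -/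
def FConseq (CS : ConstSpec Ag Const Var Atom) (T : Set (Fm Ag Const Var Atom))
    (φ : Fm Ag Const Var Atom) : Prop :=
  ∀ (S : Type) (I : FIS Ag Const Var Atom S CS), ∀ r ∈ I.R, ∀ n : ℕ,
    (∀ ψ ∈ T, I.Sat ψ r n) → I.Sat φ r n

/-- Maximal consistent sets of formulas. -/
def MCS (CS : ConstSpec Ag Const Var Atom) : Set (Set (Fm Ag Const Var Atom)) :=
  {Γ | Consistent CS Γ ∧ ∀ Δ, Γ ⊂ Δ → ¬ Consistent CS Δ}

/-- χ-maximal consistent subsets of Subf⁺(χ). -/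
def MCSx (CS : ConstSpec Ag Const Var Atom) (χ : Fm Ag Const Var Atom) :
    Set (Set (Fm Ag Const Var Atom)) :=
  {X | X ⊆ Fm.subfPlus χ ∧ Consistent CS X ∧
    ∀ Y, Y ⊆ Fm.subfPlus χ → X ⊂ Y → ¬ Consistent CS Y}

/-- The relation R_○ on MCS_χ (given by witnessing maximal consistent sets). -/
def Rnext (CS : ConstSpec Ag Const Var Atom) (χ : Fm Ag Const Var Atom)
    (X Y : Set (Fm Ag Const Var Atom)) : Prop :=
  ∃ Γ ∈ MCS CS, ∃ Δ ∈ MCS CS, X = Γ ∩ Fm.subfPlus χ ∧ Y = Δ ∩ Fm.subfPlus χ ∧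
    {φ | Fm.next φ ∈ Γ} ⊆ Δ

/-- Acceptable sequences of elements of MCS_χ. -/
def Acceptable (CS : ConstSpec Ag Const Var Atom) (χ : Fm Ag Const Var Atom)
    (X : ℕ → Set (Fm Ag Const Var Atom)) : Prop :=
  (∀ n, X n ∈ MCSx CS χ) ∧
  (∀ n, Rnext CS χ (X n) (X (n + 1))) ∧
  (∀ n (φ ψ : Fm Ag Const Var Atom), Fm.untl φ ψ ∈ X n →
    ∃ m, n ≤ m ∧ ψ ∈ X m ∧ ∀ k, n ≤ k → k < m → φ ∈ X k) ∧
  Fm.wprev Fm.bot ∈ X 0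

/-- The canonical epistemic accessibility relation. -/
def canK (CS : ConstSpec Ag Const Var Atom) (χ : Fm Ag Const Var Atom) (i : Ag)
    (X Y : Set (Fm Ag Const Var Atom)) : Prop :=
  ∀ Δ ∈ MCS CS, Y = Δ ∩ Fm.subfPlus χ →
    ∃ Γ ∈ MCS CS, X = Γ ∩ Fm.subfPlus χ ∧
      {φ | ∃ t : TmE Const Var, Fm.jbox i t φ ∈ Γ} ⊆ Δ

/-- The canonical evidence function. -/
def canE (CS : ConstSpec Ag Const Var Atom) (χ : Fm Ag Const Var Atom) (i : Ag)
    (X : Set (Fm Ag Const Var Atom)) (t : TmE Const Var) : Set (Fm Ag Const Var Atom) :=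
  {φ | ∀ Γ ∈ MCS CS, X = Γ ∩ Fm.subfPlus χ → Fm.jbox i t φ ∈ Γ}

/-- The canonical deontic accessibility relation. -/
def canKO (CS : ConstSpec Ag Const Var Atom) (χ : Fm Ag Const Var Atom) (i : Ag)
    (X Y : Set (Fm Ag Const Var Atom)) : Prop :=
  ∃ Γ ∈ MCS CS, ∃ Δ ∈ MCS CS, X = Γ ∩ Fm.subfPlus χ ∧ Y = Δ ∩ Fm.subfPlus χ ∧
    {φ | ∃ t : TmO Const Var, Fm.obox i t φ ∈ Γ} ⊆ Δ

/-- The canonical normative evidence function. -/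
def canEO (CS : ConstSpec Ag Const Var Atom) (χ : Fm Ag Const Var Atom) (i : Ag)
    (X : Set (Fm Ag Const Var Atom)) (t : TmO Const Var) : Set (Fm Ag Const Var Atom) :=
  {φ | ∀ Γ ∈ MCS CS, X = Γ ∩ Fm.subfPlus χ → Fm.obox i t φ ∈ Γ}

/-- The χ-canonical F-interpreted system (as structured data). -/
def canFQuasi (CS : ConstSpec Ag Const Var Atom) (χ : Fm Ag Const Var Atom) :
    FQuasi Ag Const Var Atom ↥(MCSx CS χ) where
  R := {r | Acceptable CS χ (fun n => ((r n : Set (Fm Ag Const Var Atom))))}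
  K := fun i X Y => canK CS χ i X.1 Y.1
  KO := fun i X Y => canKO CS χ i X.1 Y.1
  E := fun i X t => canE CS χ i X.1 t
  EO := fun i X t => canEO CS χ i X.1 t
  val := fun X => {p | Fm.atom p ∈ X.1}

end JTO
namespace JTO

variable {Ag Const Var Atom : Type}

/-- The data of a quasi-interpreted-neighborhood system. -/
structure NQuasi (Ag Const Var Atom S : Type) where
  R : Set (ℕ → S)
  N : Ag → S → TmE Const Var → Set (Set S)
  NO : Ag → S → TmO Const Var → Set (Set S)
  val : S → Set Atom
  valF : S → Set (Fm Ag Const Var Atom)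

/-- The image Im(R) of the system of runs. -/
def NQuasi.Im {S : Type} (I : NQuasi Ag Const Var Atom S) : Set S :=
  {w | ∃ r ∈ I.R, ∃ n : ℕ, r n = w}

/-- Truth at a point (r, n) of a quasi-interpreted-neighborhood system. -/
def NQuasi.SatP {S : Type} (I : NQuasi Ag Const Var Atom S) :
    Fm Ag Const Var Atom → (ℕ → S) → ℕ → Prop
  | .atom p, r, n => p ∈ I.val (r n)
  | .bot, _, _ => False
  | .imp φ ψ, r, n => I.SatP φ r n → I.SatP ψ r n
  | .next φ, r, n => I.SatP φ r (n + 1)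
  | .wprev φ, r, n => n = 0 ∨ I.SatP φ r (n - 1)
  | .untl φ ψ, r, n => ∃ m, n ≤ m ∧ I.SatP ψ r m ∧ ∀ k, n ≤ k → k < m → I.SatP φ r k
  | .snce φ ψ, r, n => ∃ m, m ≤ n ∧ I.SatP ψ r m ∧ ∀ k, m < k → k ≤ n → I.SatP φ r k
  | .jbox i t φ, r, n =>
      {w | (∃ r' ∈ I.R, ∃ n' : ℕ, r' n' = w ∧ I.SatP φ r' n') ∨
            (w ∉ I.Im ∧ φ ∈ I.valF w)} ∈ I.N i (r n) t
  | .obox i t φ, r, n =>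
      {w | (∃ r' ∈ I.R, ∃ n' : ℕ, r' n' = w ∧ I.SatP φ r' n') ∨
            (w ∉ I.Im ∧ φ ∈ I.valF w)} ∈ I.NO i (r n) t

/-- Truth at a state of a quasi-interpreted-neighborhood system. -/
def NQuasi.SatS {S : Type} (I : NQuasi Ag Const Var Atom S)
    (φ : Fm Ag Const Var Atom) (w : S) : Prop :=
  (∃ r ∈ I.R, ∃ n : ℕ, r n = w ∧ I.SatP φ r n) ∨ (w ∉ I.Im ∧ φ ∈ I.valF w)

/-- The truth set ⟦φ⟧ of a formula. -/
def NQuasi.tset {S : Type} (I : NQuasi Ag Const Var Atom S)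
    (φ : Fm Ag Const Var Atom) : Set S :=
  {w | I.SatS φ w}

/-- An interpreted-neighborhood system for JTO_CS. -/
structure NIS (Ag Const Var Atom S : Type) (CS : ConstSpec Ag Const Var Atom)
    extends NQuasi Ag Const Var Atom S where
  Sne : Nonempty S
  Rne : R.Nonempty
  Ncs : ∀ (i : Ag) (t : TmE Const Var) (φ : Fm Ag Const Var Atom),
    Fm.jbox i t φ ∈ CS.csE → ∀ w ∈ toNQuasi.Im, toNQuasi.tset φ ∈ N i w t
  Napp : ∀ (i : Ag), ∀ w ∈ toNQuasi.Im, ∀ (t s : TmE Const Var) (φ ψ : Fm Ag Const Var Atom),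
    toNQuasi.tset (φ.imp ψ) ∈ N i w t → toNQuasi.tset φ ∈ N i w s →
      toNQuasi.tset ψ ∈ N i w (TmE.times t s)
  Nsum : ∀ (i : Ag), ∀ w ∈ toNQuasi.Im, ∀ (t s : TmE Const Var) (φ : Fm Ag Const Var Atom),
    toNQuasi.tset φ ∈ N i w s →
      toNQuasi.tset φ ∈ N i w (TmE.plus t s) ∧ toNQuasi.tset φ ∈ N i w (TmE.plus s t)
  Nrefl : ∀ (i : Ag), ∀ w ∈ toNQuasi.Im, ∀ (t : TmE Const Var) (φ : Fm Ag Const Var Atom),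
    toNQuasi.tset φ ∈ N i w t → w ∈ toNQuasi.tset φ
  Npos : ∀ (i : Ag), ∀ w ∈ toNQuasi.Im, ∀ (t : TmE Const Var) (φ : Fm Ag Const Var Atom),
    toNQuasi.tset φ ∈ N i w t → toNQuasi.tset (Fm.jbox i t φ) ∈ N i w (TmE.bang t)
  NOcs : ∀ (i : Ag) (t : TmO Const Var) (φ : Fm Ag Const Var Atom),
    Fm.obox i t φ ∈ CS.csO → ∀ w ∈ toNQuasi.Im, toNQuasi.tset φ ∈ NO i w t
  NOapp : ∀ (i : Ag), ∀ w ∈ toNQuasi.Im, ∀ (t s : TmO Const Var) (φ ψ : Fm Ag Const Var Atom),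
    toNQuasi.tset (φ.imp ψ) ∈ NO i w t → toNQuasi.tset φ ∈ NO i w s →
      toNQuasi.tset ψ ∈ NO i w (TmO.times t s)
  NOnoc : ∀ (i : Ag), ∀ w ∈ toNQuasi.Im, ∀ (t : TmO Const Var) (φ : Fm Ag Const Var Atom),
    toNQuasi.tset φ ∈ NO i w t → toNQuasi.tset (Fm.neg φ) ∉ NO i w t
  NOfact : ∀ (i : Ag), ∀ w ∈ toNQuasi.Im, ∀ (t : TmO Const Var) (φ : Fm Ag Const Var Atom),
    toNQuasi.tset ((Fm.obox i t φ).imp φ) ∈ NO i w (TmO.ddag t)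

/-- Truth at a point of an interpreted-neighborhood system. -/
abbrev NIS.SatP {S : Type} {CS : ConstSpec Ag Const Var Atom}
    (I : NIS Ag Const Var Atom S CS) :
    Fm Ag Const Var Atom → (ℕ → S) → ℕ → Prop :=
  I.toNQuasi.SatP

/-- I ⊨ φ for an interpreted-neighborhood system. -/
def NIS.Valid {S : Type} {CS : ConstSpec Ag Const Var Atom}
    (I : NIS Ag Const Var Atom S CS) (φ : Fm Ag Const Var Atom) : Prop :=
  ∀ r ∈ I.R, ∀ n : ℕ, I.SatP φ r n

/-- ⊨^N_CS φ : validity in all interpreted-neighborhood systems for JTO_CS. -/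
def NValid (CS : ConstSpec Ag Const Var Atom) (φ : Fm Ag Const Var Atom) : Prop :=
  ∀ (S : Type) (I : NIS Ag Const Var Atom S CS), I.Valid φ

/-- T ⊨^N_CS φ : local consequence over interpreted-neighborhood systems. -/
def NConseq (CS : ConstSpec Ag Const Var Atom) (T : Set (Fm Ag Const Var Atom))
    (φ : Fm Ag Const Var Atom) : Prop :=
  ∀ (S : Type) (I : NIS Ag Const Var Atom S CS), ∀ r ∈ I.R, ∀ n : ℕ,
    (∀ ψ ∈ T, I.SatP ψ r n) → I.SatP φ r n

end JTO

namespace JTO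


/-! ### Infrastructure for the truth lemma -/

variable {Ag Const Var Atom : Type} {CS : ConstSpec Ag Const Var Atom}

section Taut

variable (a b c d : Fm Ag Const Var Atom)

lemma taut_id : Taut (a.imp a) := by
  intro v h0 h1; simp only [h1]; cases v a <;> rfl

lemma taut_top : Taut (Fm.top : Fm Ag Const Var Atom) := by
  intro v h0 h1; simp only [Fm.top, Fm.neg, h1, h0]; rfl

lemma taut_K : Taut (a.imp (b.imp a)) := by
  intro v h0 h1; simp only [h1]; cases v a <;> cases v b <;> rfl

lemma taut_S : Taut ((a.imp (b.imp c)).imp ((a.imp b).imp (a.imp c))) := by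
  intro v h0 h1; simp only [h1]; cases v a <;> cases v b <;> cases v c <;> rfl

lemma taut_imp_top : Taut (a.imp Fm.top) := by
  intro v h0 h1; simp only [Fm.top, Fm.neg, h1, h0]; cases v a <;> rfl

lemma taut_bot_imp : Taut (Fm.bot.imp a) := by
  intro v h0 h1; simp only [h1, h0]; rfl

lemma taut_conj_elim_l : Taut ((a.conj b).imp a) := by
  intro v h0 h1; simp only [Fm.conj, Fm.disj, Fm.neg, h1, h0]
  cases v a <;> cases v b <;> rfl

lemma taut_conj_elim_r : Taut ((a.conj b).imp b) := by
  intro v h0 h1; simp only [Fm.conj, Fm.disj, Fm.neg, h1, h0]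
  cases v a <;> cases v b <;> rfl

lemma taut_conj_intro : Taut (a.imp (b.imp (a.conj b))) := by
  intro v h0 h1; simp only [Fm.conj, Fm.disj, Fm.neg, h1, h0]
  cases v a <;> cases v b <;> rfl

lemma taut_conj_mono_r : Taut ((b.imp c).imp ((a.conj b).imp (a.conj c))) := by
  intro v h0 h1; simp only [Fm.conj, Fm.disj, Fm.neg, h1, h0]
  cases v a <;> cases v b <;> cases v c <;> rfl

lemma taut_curry : Taut (((a.conj b).imp c).imp (b.imp (a.imp c))) := by
  intro v h0 h1; simp only [Fm.conj, Fm.disj, Fm.neg, h1, h0]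
  cases v a <;> cases v b <;> cases v c <;> rfl

lemma taut_contract : Taut ((a.imp (a.imp b)).imp (a.imp b)) := by
  intro v h0 h1; simp only [h1]; cases v a <;> cases v b <;> rfl

lemma taut_uncurry4 : Taut ((c.imp (a.imp (b.imp d))).imp ((b.conj c).imp (a.imp d))) := by
  intro v h0 h1; simp only [Fm.conj, Fm.disj, Fm.neg, h1, h0]
  cases v a <;> cases v b <;> cases v c <;> cases v d <;> rfl

lemma taut_trans : Taut ((a.imp b).imp ((b.imp c).imp (a.imp c))) := by
  intro v h0 h1; simp only [h1]; cases v a <;> cases v b <;> cases v c <;> rfl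

lemma taut_biim_l : Taut ((Fm.biim a b).imp (a.imp b)) := by
  intro v h0 h1; simp only [Fm.biim, Fm.conj, Fm.disj, Fm.neg, h1, h0]
  cases v a <;> cases v b <;> rfl

lemma taut_biim_r : Taut ((Fm.biim a b).imp (b.imp a)) := by
  intro v h0 h1; simp only [Fm.biim, Fm.conj, Fm.disj, Fm.neg, h1, h0]
  cases v a <;> cases v b <;> rfl

lemma taut_disj_l : Taut (a.imp (a.disj b)) := by
  intro v h0 h1; simp only [Fm.disj, Fm.neg, h1, h0]; cases v a <;> cases v b <;> rfl

lemma taut_disj_r : Taut (b.imp (a.disj b)) := by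
  intro v h0 h1; simp only [Fm.disj, Fm.neg, h1, h0]; cases v a <;> cases v b <;> rfl

lemma taut_disj_elim_neg : Taut ((a.disj b).imp ((Fm.neg a).imp b)) := by
  intro v h0 h1; simp only [Fm.disj, Fm.neg, h1, h0]; cases v a <;> cases v b <;> rfl

lemma taut_dni : Taut (a.imp (Fm.neg (Fm.neg a))) := by
  intro v h0 h1; simp only [Fm.neg, h1, h0]; cases v a <;> rfl

lemma taut_efq_imp : Taut ((Fm.neg a).imp (a.imp b)) := by
  intro v h0 h1; simp only [Fm.neg, h1, h0]; cases v a <;> cases v b <;> rfl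

lemma taut_disj_conj_neg : Taut ((a.disj (b.conj c)).imp ((Fm.neg c).imp a)) := by
  intro v h0 h1; simp only [Fm.conj, Fm.disj, Fm.neg, h1, h0]
  cases v a <;> cases v b <;> cases v c <;> rfl

end Taut

section DerivLemmas

variable {a b c : Fm Ag Const Var Atom}

lemma deriv_taut (h : Taut a) : Deriv CS a := Deriv.ax (IsAxiom.taut h)

lemma deriv_top : Deriv CS (Fm.top : Fm Ag Const Var Atom) := deriv_taut taut_top

lemma deriv_imp_trans (h1 : Deriv CS (a.imp b)) (h2 : Deriv CS (b.imp c)) :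
    Deriv CS (a.imp c) :=
  Deriv.mp (Deriv.mp (deriv_taut (taut_trans a b c)) h1) h2

lemma deriv_wprev_mono (h : Deriv CS (a.imp b)) :
    Deriv CS ((Fm.wprev a).imp (Fm.wprev b)) :=
  Deriv.mp (Deriv.ax (IsAxiom.wprevK a b)) (Deriv.necWPrev h)

lemma deriv_biim_mp (h : Deriv CS (Fm.biim a b)) : Deriv CS (a.imp b) :=
  Deriv.mp (deriv_taut (taut_biim_l a b)) h

lemma deriv_biim_mpr (h : Deriv CS (Fm.biim a b)) : Deriv CS (b.imp a) :=
  Deriv.mp (deriv_taut (taut_biim_r a b)) h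

end DerivLemmas

section DerivFromLemmas

variable {T : Set (Fm Ag Const Var Atom)} {φ ψ : Fm Ag Const Var Atom}

lemma deriv_conj_imp_of_mem {L : List (Fm Ag Const Var Atom)} (h : φ ∈ L) :
    Deriv CS ((conjList L).imp φ) := by
  induction L with
  | nil => exact absurd h List.not_mem_nil
  | cons ψ L ih =>
    rcases List.mem_cons.1 h with rfl | h
    · exact deriv_taut (taut_conj_elim_l _ _)
    · exact deriv_imp_trans (deriv_taut (taut_conj_elim_r _ _)) (ih h)

lemma deriv_conj_append_left (L1 L2 : List (Fm Ag Const Var Atom)) :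
    Deriv CS ((conjList (L1 ++ L2)).imp (conjList L1)) := by
  induction L1 with
  | nil => exact deriv_taut (taut_imp_top _)
  | cons a L1 ih =>
    exact Deriv.mp (deriv_taut (taut_conj_mono_r a _ _)) ih

lemma deriv_conj_append_right (L1 L2 : List (Fm Ag Const Var Atom)) :
    Deriv CS ((conjList (L1 ++ L2)).imp (conjList L2)) := by
  induction L1 with
  | nil => exact deriv_taut (taut_id _)
  | cons a L1 ih =>
    exact deriv_imp_trans (deriv_taut (taut_conj_elim_r a _)) ih

lemma derivFrom_of_deriv (h : Deriv CS φ) : DerivFrom CS T φ :=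
  ⟨[], by simp, Deriv.mp (deriv_taut (taut_K φ Fm.top)) h⟩

lemma derivFrom_mem (h : φ ∈ T) : DerivFrom CS T φ :=
  ⟨[φ], by simpa using h, deriv_taut (taut_conj_elim_l φ Fm.top)⟩

lemma derivFrom_mp (h1 : DerivFrom CS T (φ.imp ψ)) (h2 : DerivFrom CS T φ) :
    DerivFrom CS T ψ := by
  obtain ⟨L1, hL1, d1⟩ := h1
  obtain ⟨L2, hL2, d2⟩ := h2
  refine ⟨L1 ++ L2, ?_, ?_⟩
  · intro χ hχ; rcases List.mem_append.1 hχ with h | h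
    · exact hL1 χ h
    · exact hL2 χ h
  · have e1 : Deriv CS ((conjList (L1 ++ L2)).imp (φ.imp ψ)) :=
      deriv_imp_trans (deriv_conj_append_left L1 L2) d1
    have e2 : Deriv CS ((conjList (L1 ++ L2)).imp φ) :=
      deriv_imp_trans (deriv_conj_append_right L1 L2) d2
    exact Deriv.mp (Deriv.mp (deriv_taut (taut_S _ φ ψ)) e1) e2

lemma derivFrom_mono {T' : Set (Fm Ag Const Var Atom)} (hT : T ⊆ T')
    (h : DerivFrom CS T φ) : DerivFrom CS T' φ := by
  obtain ⟨L, hL, d⟩ := h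
  exact ⟨L, fun χ hχ => hT (hL χ hχ), d⟩

lemma deduction_aux :
    ∀ (L : List (Fm Ag Const Var Atom)) (α : Fm Ag Const Var Atom),
      (∀ ψ ∈ L, ψ ∈ insert φ T) → Deriv CS ((conjList L).imp α) →
      ∃ L' : List (Fm Ag Const Var Atom),
        (∀ ψ ∈ L', ψ ∈ T) ∧ Deriv CS ((conjList L').imp (φ.imp α)) := by
  intro L
  induction L with
  | nil =>
    intro α _ d
    have hα : Deriv CS α := Deriv.mp d deriv_top
    exact ⟨[], by simp, Deriv.mp (deriv_taut (taut_K _ _))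
      (Deriv.mp (deriv_taut (taut_K α φ)) hα)⟩
  | cons ψ L ih =>
    intro α hmem d
    have d' : Deriv CS ((conjList L).imp (ψ.imp α)) :=
      Deriv.mp (deriv_taut (taut_curry ψ (conjList L) α)) d
    obtain ⟨L', hL', d''⟩ := ih (ψ.imp α) (fun χ hχ => hmem χ (List.mem_cons_of_mem ψ hχ)) d'
    rcases hmem ψ List.mem_cons_self with rfl | hψT
    · exact ⟨L', hL', deriv_imp_trans d'' (deriv_taut (taut_contract ψ α))⟩
    · refine ⟨ψ :: L', ?_, ?_⟩
      · intro χ hχ; rcases List.mem_cons.1 hχ with rfl | h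
        · exact hψT
        · exact hL' χ h
      · exact Deriv.mp (deriv_taut (taut_uncurry4 φ ψ (conjList L') α)) d''

lemma deduction (h : DerivFrom CS (insert φ T) ψ) : DerivFrom CS T (φ.imp ψ) := by
  obtain ⟨L, hL, d⟩ := h
  obtain ⟨L', hL', d'⟩ := deduction_aux L ψ hL d
  exact ⟨L', hL', d'⟩

lemma consistent_mono {T' : Set (Fm Ag Const Var Atom)} (hT : T ⊆ T')
    (h : Consistent CS T') : Consistent CS T :=
  fun hd => h (derivFrom_mono hT hd)

end DerivFromLemmas


section MCSLemmas

variable {T Γ Δ : Set (Fm Ag Const Var Atom)} {φ ψ : Fm Ag Const Var Atom}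

lemma mcs_closed (hΓ : Γ ∈ MCS CS) (h : DerivFrom CS Γ φ) : φ ∈ Γ := by
  by_contra hφ
  have hinc : ¬ Consistent CS (insert φ Γ) := hΓ.2 _ (Set.ssubset_insert hφ)
  rw [Consistent, not_not] at hinc
  have hneg : DerivFrom CS Γ (φ.imp Fm.bot) := deduction hinc
  exact hΓ.1 (derivFrom_mp hneg h)

lemma mcs_thm (hΓ : Γ ∈ MCS CS) (h : Deriv CS φ) : φ ∈ Γ :=
  mcs_closed hΓ (derivFrom_of_deriv h)

lemma mcs_mp (hΓ : Γ ∈ MCS CS) (h1 : φ.imp ψ ∈ Γ) (h2 : φ ∈ Γ) : ψ ∈ Γ :=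
  mcs_closed hΓ (derivFrom_mp (derivFrom_mem h1) (derivFrom_mem h2))

lemma mcs_neg_of_not_mem (hΓ : Γ ∈ MCS CS) (h : φ ∉ Γ) : Fm.neg φ ∈ Γ := by
  have hinc : ¬ Consistent CS (insert φ Γ) := hΓ.2 _ (Set.ssubset_insert h)
  rw [Consistent, not_not] at hinc
  exact mcs_closed hΓ (deduction hinc)

lemma mcs_not_both (hΓ : Γ ∈ MCS CS) (h1 : φ ∈ Γ) (h2 : Fm.neg φ ∈ Γ) : False :=
  hΓ.1 (derivFrom_mp (derivFrom_mem h2) (derivFrom_mem h1))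

lemma lindenbaum (hT : Consistent CS T) : ∃ Γ ∈ MCS CS, T ⊆ Γ := by
  have hchain : ∀ c ⊆ {Δ : Set (Fm Ag Const Var Atom) | Consistent CS Δ},
      IsChain (· ⊆ ·) c → c.Nonempty →
      ∃ ub ∈ {Δ : Set (Fm Ag Const Var Atom) | Consistent CS Δ}, ∀ s ∈ c, s ⊆ ub := by
    intro c hc hchain hne
    refine ⟨⋃₀ c, ?_, fun s hs => Set.subset_sUnion_of_mem hs⟩
    intro hd
    obtain ⟨L, hL, d⟩ := hd
    have hfind : ∀ L' : List (Fm Ag Const Var Atom), (∀ ψ ∈ L', ψ ∈ ⋃₀ c) →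
        ∃ Δ ∈ c, ∀ ψ ∈ L', ψ ∈ Δ := by
      intro L'
      induction L' with
      | nil => exact fun _ => ⟨hne.choose, hne.choose_spec, by simp⟩
      | cons ψ L' ih =>
        intro hmem
        obtain ⟨Δ, hΔ, hΔ'⟩ := ih (fun χ hχ => hmem χ (List.mem_cons_of_mem ψ hχ))
        obtain ⟨Δ', hΔ'c, hψΔ'⟩ := hmem ψ List.mem_cons_self
        rcases eq_or_ne Δ Δ' with rfl | hne'
        · exact ⟨Δ, hΔ, fun χ hχ => by
            rcases List.mem_cons.1 hχ with rfl | h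
            · exact hψΔ'
            · exact hΔ' χ h⟩
        · rcases hchain hΔ hΔ'c hne' with hsub | hsub
          · exact ⟨Δ', hΔ'c, fun χ hχ => by
              rcases List.mem_cons.1 hχ with rfl | h
              · exact hψΔ'
              · exact hsub (hΔ' χ h)⟩
          · exact ⟨Δ, hΔ, fun χ hχ => by
              rcases List.mem_cons.1 hχ with rfl | h
              · exact hsub hψΔ'
              · exact hΔ' χ h⟩
    obtain ⟨Δ, hΔc, hLΔ⟩ := hfind L hL
    exact hc hΔc ⟨L, hLΔ, d⟩
  obtain ⟨m, hTm, hmax⟩ :=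
    zorn_subset_nonempty {Δ : Set (Fm Ag Const Var Atom) | Consistent CS Δ} hchain T hT
  refine ⟨m, ⟨hmax.1, ?_⟩, hTm⟩
  intro Δ hsub hcons
  exact hsub.2 (hmax.2 hcons hsub.1)

end MCSLemmas

section SubfLemmas

variable {φ ψ χ : Fm Ag Const Var Atom}

lemma mem_subf_self (φ : Fm Ag Const Var Atom) : φ ∈ φ.subf := by
  cases φ <;> simp [Fm.subf]

lemma subf_trans : ∀ φ ψ : Fm Ag Const Var Atom, ψ ∈ φ.subf → ψ.subf ⊆ φ.subf := by
  intro φ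
  induction φ with
  | atom p => intro ψ h; simp only [Fm.subf, Set.mem_singleton_iff] at h; subst h
              simp [Fm.subf]
  | bot => intro ψ h; simp only [Fm.subf, Set.mem_singleton_iff] at h; subst h
           simp [Fm.subf]
  | imp a b iha ihb =>
    intro ψ h
    rcases Set.mem_insert_iff.1 h with rfl | h
    · exact subset_rfl
    · rcases h with h | h
      · exact ((iha ψ h).trans Set.subset_union_left).trans (Set.subset_insert _ _)
      · exact ((ihb ψ h).trans Set.subset_union_right).trans (Set.subset_insert _ _)
  | next a iha =>
    intro ψ h
    rcases Set.mem_insert_iff.1 h with rfl | h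
    · exact subset_rfl
    · exact (iha ψ h).trans (Set.subset_insert _ _)
  | wprev a iha =>
    intro ψ h
    rcases Set.mem_insert_iff.1 h with rfl | h
    · exact subset_rfl
    · exact (iha ψ h).trans (Set.subset_insert _ _)
  | untl a b iha ihb =>
    intro ψ h
    rcases Set.mem_insert_iff.1 h with rfl | h
    · exact subset_rfl
    · rcases h with h | h
      · exact ((iha ψ h).trans Set.subset_union_left).trans (Set.subset_insert _ _)
      · exact ((ihb ψ h).trans Set.subset_union_right).trans (Set.subset_insert _ _)
  | snce a b iha ihb =>
    intro ψ h
    rcases Set.mem_insert_iff.1 h with rfl | h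
    · exact subset_rfl
    · rcases h with h | h
      · exact ((iha ψ h).trans Set.subset_union_left).trans (Set.subset_insert _ _)
      · exact ((ihb ψ h).trans Set.subset_union_right).trans (Set.subset_insert _ _)
  | jbox i t a iha =>
    intro ψ h
    rcases Set.mem_insert_iff.1 h with rfl | h
    · exact subset_rfl
    · exact (iha ψ h).trans (Set.subset_insert _ _)
  | obox i t a iha =>
    intro ψ h
    rcases Set.mem_insert_iff.1 h with rfl | h
    · exact subset_rfl
    · exact (iha ψ h).trans (Set.subset_insert _ _)

/-- The base set A_χ. -/
def achi (χ : Fm Ag Const Var Atom) : Set (Fm Ag Const Var Atom) :=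
  χ.subf ∪ (Fm.snce Fm.top (Fm.wprev Fm.bot)).subf

lemma achi_closed (h : φ ∈ achi χ) : φ.subf ⊆ achi χ := by
  rcases h with h | h
  · exact (subf_trans _ _ h).trans Set.subset_union_left
  · exact (subf_trans _ _ h).trans Set.subset_union_right

lemma achi_subset_subfPlus : achi χ ⊆ Fm.subfPlus χ := fun _ h => Or.inl h

lemma bot_mem_achi : (Fm.bot : Fm Ag Const Var Atom) ∈ achi χ := by
  right; simp [Fm.subf, Fm.top]

lemma subfPlus_cases (h : φ ∈ Fm.subfPlus χ) :
    φ ∈ achi χ ∨ ∃ ψ ∈ achi χ, φ = Fm.neg ψ := by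
  rcases h with h | ⟨ψ, hψ, rfl⟩
  · exact Or.inl h
  · exact Or.inr ⟨ψ, hψ, rfl⟩

lemma subfPlus_imp (h : φ.imp ψ ∈ Fm.subfPlus χ) :
    φ ∈ Fm.subfPlus χ ∧ ψ ∈ Fm.subfPlus χ := by
  rcases subfPlus_cases h with h | ⟨α, hα, heq⟩
  · have hsub := achi_closed h
    constructor
    · exact achi_subset_subfPlus (hsub (by simp [Fm.subf, mem_subf_self]))
    · exact achi_subset_subfPlus (hsub (by simp [Fm.subf, mem_subf_self]))
  · have h1 : φ = α ∧ ψ = Fm.bot := by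
      rw [Fm.neg] at heq
      exact ⟨by injection heq, by injection heq⟩
    obtain ⟨rfl, rfl⟩ := h1
    exact ⟨achi_subset_subfPlus hα, achi_subset_subfPlus bot_mem_achi⟩

lemma subfPlus_achi_of_not_imp (h : φ ∈ Fm.subfPlus χ)
    (hni : ∀ a b : Fm Ag Const Var Atom, φ ≠ a.imp b) : φ ∈ achi χ := by
  rcases subfPlus_cases h with h | ⟨α, hα, heq⟩
  · exact h
  · exact absurd heq (hni α Fm.bot)

lemma subfPlus_next (h : Fm.next φ ∈ Fm.subfPlus χ) : φ ∈ Fm.subfPlus χ := by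
  have ha : Fm.next φ ∈ achi χ := subfPlus_achi_of_not_imp h (by intro a b hab; cases hab)
  exact achi_subset_subfPlus (achi_closed ha (by simp [Fm.subf, mem_subf_self]))

lemma subfPlus_wprev (h : Fm.wprev φ ∈ Fm.subfPlus χ) : φ ∈ Fm.subfPlus χ := by
  have ha : Fm.wprev φ ∈ achi χ := subfPlus_achi_of_not_imp h (by intro a b hab; cases hab)
  exact achi_subset_subfPlus (achi_closed ha (by simp [Fm.subf, mem_subf_self]))

lemma subfPlus_untl (h : Fm.untl φ ψ ∈ Fm.subfPlus χ) :
    φ ∈ Fm.subfPlus χ ∧ ψ ∈ Fm.subfPlus χ := by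
  have ha : Fm.untl φ ψ ∈ achi χ := subfPlus_achi_of_not_imp h (by intro a b hab; cases hab)
  have hsub := achi_closed ha
  exact ⟨achi_subset_subfPlus (hsub (by simp [Fm.subf, mem_subf_self])),
    achi_subset_subfPlus (hsub (by simp [Fm.subf, mem_subf_self]))⟩

lemma subfPlus_snce (h : Fm.snce φ ψ ∈ Fm.subfPlus χ) :
    φ ∈ Fm.subfPlus χ ∧ ψ ∈ Fm.subfPlus χ := by
  have ha : Fm.snce φ ψ ∈ achi χ := subfPlus_achi_of_not_imp h (by intro a b hab; cases hab)
  have hsub := achi_closed ha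
  exact ⟨achi_subset_subfPlus (hsub (by simp [Fm.subf, mem_subf_self])),
    achi_subset_subfPlus (hsub (by simp [Fm.subf, mem_subf_self]))⟩

lemma subfPlus_jbox {i : Ag} {t : TmE Const Var} (h : Fm.jbox i t φ ∈ Fm.subfPlus χ) :
    φ ∈ Fm.subfPlus χ := by
  have ha : Fm.jbox i t φ ∈ achi χ := subfPlus_achi_of_not_imp h (by intro a b hab; cases hab)
  exact achi_subset_subfPlus (achi_closed ha (by simp [Fm.subf, mem_subf_self]))

lemma subfPlus_obox {i : Ag} {t : TmO Const Var} (h : Fm.obox i t φ ∈ Fm.subfPlus χ) :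
    φ ∈ Fm.subfPlus χ := by
  have ha : Fm.obox i t φ ∈ achi χ := subfPlus_achi_of_not_imp h (by intro a b hab; cases hab)
  exact achi_subset_subfPlus (achi_closed ha (by simp [Fm.subf, mem_subf_self]))

end SubfLemmas


section MCSxLemmas

variable {χ φ ψ : Fm Ag Const Var Atom} {X Y Γ : Set (Fm Ag Const Var Atom)}

lemma mcsx_closed (hX : X ∈ MCSx CS χ) (hφ : φ ∈ Fm.subfPlus χ)
    (h : DerivFrom CS X φ) : φ ∈ X := by
  by_contra hn
  have hcons : Consistent CS (insert φ X) := by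
    intro hd
    have hneg : DerivFrom CS X (φ.imp Fm.bot) := deduction hd
    exact hX.2.1 (derivFrom_mp hneg h)
  exact hX.2.2 (insert φ X) (Set.insert_subset hφ hX.1) (Set.ssubset_insert hn) hcons

lemma mcsx_bot_not_mem (hX : X ∈ MCSx CS χ) : Fm.bot ∉ X :=
  fun h => hX.2.1 (derivFrom_mem h)

lemma mcsx_not_mem_of_neg_deriv (hX : X ∈ MCSx CS χ) (h : DerivFrom CS X (Fm.neg φ)) :
    φ ∉ X := fun hm => hX.2.1 (derivFrom_mp h (derivFrom_mem hm))

/-- Every χ-MCS is the restriction of a full MCS. -/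
lemma mcsx_exists_mcs (hX : X ∈ MCSx CS χ) :
    ∃ Γ ∈ MCS CS, X = Γ ∩ Fm.subfPlus χ := by
  obtain ⟨Γ, hΓ, hXΓ⟩ := lindenbaum hX.2.1
  refine ⟨Γ, hΓ, ?_⟩
  have hsub : X ⊆ Γ ∩ Fm.subfPlus χ := Set.subset_inter hXΓ hX.1
  by_contra hne
  have hss : X ⊂ Γ ∩ Fm.subfPlus χ := hsub.ssubset_of_ne hne
  exact hX.2.2 _ Set.inter_subset_right hss (consistent_mono Set.inter_subset_left hΓ.1)

lemma mem_restrict_iff (hφ : φ ∈ Fm.subfPlus χ) (hXe : X = Γ ∩ Fm.subfPlus χ) :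
    φ ∈ X ↔ φ ∈ Γ := by
  subst hXe; simp [hφ]

lemma mcsx_imp_iff (hX : X ∈ MCSx CS χ) (h : φ.imp ψ ∈ Fm.subfPlus χ)
    (hφ : φ ∈ Fm.subfPlus χ) (hψ : ψ ∈ Fm.subfPlus χ) :
    φ.imp ψ ∈ X ↔ (φ ∈ X → ψ ∈ X) := by
  constructor
  · intro h1 h2
    exact mcsx_closed hX hψ (derivFrom_mp (derivFrom_mem h1) (derivFrom_mem h2))
  · intro h1
    by_cases h2 : φ ∈ X
    · have hψX : ψ ∈ X := h1 h2
      exact mcsx_closed hX h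
        (derivFrom_mp (derivFrom_of_deriv (deriv_taut (taut_K ψ φ))) (derivFrom_mem hψX))
    · have hinc : ¬ Consistent CS (insert φ X) :=
        hX.2.2 _ (Set.insert_subset hφ hX.1) (Set.ssubset_insert h2)
      rw [Consistent, not_not] at hinc
      have hneg : DerivFrom CS X (Fm.neg φ) := deduction hinc
      exact mcsx_closed hX h
        (derivFrom_mp (derivFrom_of_deriv (deriv_taut (taut_efq_imp φ ψ))) hneg)

end MCSxLemmas

section TemporalLemmas

variable {χ φ ψ : Fm Ag Const Var Atom} {X Y : Set (Fm Ag Const Var Atom)}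

lemma rnext_next_iff (hR : Rnext CS χ X Y) (h : Fm.next φ ∈ Fm.subfPlus χ)
    (hφ : φ ∈ Fm.subfPlus χ) : Fm.next φ ∈ X ↔ φ ∈ Y := by
  obtain ⟨Γ, hΓ, Δ, hΔ, hXe, hYe, hsub⟩ := hR
  rw [mem_restrict_iff h hXe, mem_restrict_iff hφ hYe]
  constructor
  · intro h1; exact hsub h1
  · intro h1; by_contra h2
    have hnn : Fm.neg (Fm.next φ) ∈ Γ := mcs_neg_of_not_mem hΓ h2
    have hfn : Fm.next (Fm.neg φ) ∈ Γ :=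
      mcs_mp hΓ (mcs_thm hΓ (deriv_biim_mpr (Deriv.ax (IsAxiom.fn φ)))) hnn
    exact mcs_not_both hΔ h1 (hsub hfn)

lemma mcsx_wprev_of_initial (hX : X ∈ MCSx CS χ) (h0 : Fm.wprev Fm.bot ∈ X)
    (h : Fm.wprev φ ∈ Fm.subfPlus χ) : Fm.wprev φ ∈ X := by
  have d : Deriv CS ((Fm.wprev (Fm.bot : Fm Ag Const Var Atom)).imp (Fm.wprev φ)) :=
    deriv_wprev_mono (deriv_taut (taut_bot_imp φ))
  exact mcsx_closed hX h (derivFrom_mp (derivFrom_of_deriv d) (derivFrom_mem h0))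

lemma rnext_wprev_iff (hR : Rnext CS χ X Y) (h : Fm.wprev φ ∈ Fm.subfPlus χ)
    (hφ : φ ∈ Fm.subfPlus χ) : φ ∈ X ↔ Fm.wprev φ ∈ Y := by
  obtain ⟨Γ, hΓ, Δ, hΔ, hXe, hYe, hsub⟩ := hR
  rw [mem_restrict_iff hφ hXe, mem_restrict_iff h hYe]
  constructor
  · intro h1
    have h2 : Fm.next (Fm.sprev φ) ∈ Γ := mcs_mp hΓ (mcs_thm hΓ (Deriv.ax (IsAxiom.fp φ))) h1
    have h3 : Fm.sprev φ ∈ Δ := hsub h2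
    exact mcs_mp hΔ (mcs_thm hΔ (Deriv.ax (IsAxiom.sw φ))) h3
  · intro h1; by_contra h2
    have hnφ : Fm.neg φ ∈ Γ := mcs_neg_of_not_mem hΓ h2
    have h3 : Fm.next (Fm.sprev (Fm.neg φ)) ∈ Γ :=
      mcs_mp hΓ (mcs_thm hΓ (Deriv.ax (IsAxiom.fp (Fm.neg φ)))) hnφ
    have h4 : Fm.sprev (Fm.neg φ) ∈ Δ := hsub h3
    -- sprev (neg φ) = neg (wprev (neg (neg φ)))
    have h5 : Fm.wprev (Fm.neg (Fm.neg φ)) ∈ Δ :=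
      mcs_mp hΔ (mcs_thm hΔ (deriv_wprev_mono (deriv_taut (taut_dni φ)))) h1
    exact mcs_not_both hΔ h5 h4

lemma mcsx_untl_of_psi (hX : X ∈ MCSx CS χ) (hu : Fm.untl φ ψ ∈ Fm.subfPlus χ)
    (hψ : ψ ∈ X) : Fm.untl φ ψ ∈ X := by
  have d : Deriv CS (ψ.imp (Fm.untl φ ψ)) :=
    deriv_imp_trans (deriv_taut (taut_disj_l ψ (φ.conj (Fm.next (Fm.untl φ ψ)))))
      (deriv_biim_mpr (Deriv.ax (IsAxiom.untl2 φ ψ)))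
  exact mcsx_closed hX hu (derivFrom_mp (derivFrom_of_deriv d) (derivFrom_mem hψ))

lemma rnext_untl_step (hR : Rnext CS χ X Y) (hu : Fm.untl φ ψ ∈ Fm.subfPlus χ)
    (hφ : φ ∈ X) (hY : Fm.untl φ ψ ∈ Y) : Fm.untl φ ψ ∈ X := by
  obtain ⟨Γ, hΓ, Δ, hΔ, hXe, hYe, hsub⟩ := hR
  have hφs : φ ∈ Fm.subfPlus χ := (subfPlus_untl hu).1
  rw [mem_restrict_iff hu hYe] at hY
  rw [mem_restrict_iff hφs hXe] at hφ
  rw [mem_restrict_iff hu hXe]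
  have hnext : Fm.next (Fm.untl φ ψ) ∈ Γ := by
    by_contra hn
    have h1 : Fm.neg (Fm.next (Fm.untl φ ψ)) ∈ Γ := mcs_neg_of_not_mem hΓ hn
    have h2 : Fm.next (Fm.neg (Fm.untl φ ψ)) ∈ Γ :=
      mcs_mp hΓ (mcs_thm hΓ (deriv_biim_mpr (Deriv.ax (IsAxiom.fn (Fm.untl φ ψ))))) h1
    exact mcs_not_both hΔ hY (hsub h2)
  have hconj : φ.conj (Fm.next (Fm.untl φ ψ)) ∈ Γ :=
    mcs_mp hΓ (mcs_mp hΓ (mcs_thm hΓ (deriv_taut (taut_conj_intro φ _))) hφ) hnext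
  have hdisj : ψ.disj (φ.conj (Fm.next (Fm.untl φ ψ))) ∈ Γ :=
    mcs_mp hΓ (mcs_thm hΓ (deriv_taut (taut_disj_r ψ _))) hconj
  exact mcs_mp hΓ (mcs_thm hΓ (deriv_biim_mpr (Deriv.ax (IsAxiom.untl2 φ ψ)))) hdisj

lemma mcsx_snce_of_psi (hX : X ∈ MCSx CS χ) (hs : Fm.snce φ ψ ∈ Fm.subfPlus χ)
    (hψ : ψ ∈ X) : Fm.snce φ ψ ∈ X := by
  have d : Deriv CS (ψ.imp (Fm.snce φ ψ)) :=
    deriv_imp_trans (deriv_taut (taut_disj_l ψ (φ.conj (Fm.sprev (Fm.snce φ ψ)))))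
      (deriv_biim_mpr (Deriv.ax (IsAxiom.snce2 φ ψ)))
  exact mcsx_closed hX hs (derivFrom_mp (derivFrom_of_deriv d) (derivFrom_mem hψ))

lemma rnext_snce_step (hR : Rnext CS χ X Y) (hs : Fm.snce φ ψ ∈ Fm.subfPlus χ)
    (hφ : φ ∈ Y) (hX : Fm.snce φ ψ ∈ X) : Fm.snce φ ψ ∈ Y := by
  obtain ⟨Γ, hΓ, Δ, hΔ, hXe, hYe, hsub⟩ := hR
  have hφs : φ ∈ Fm.subfPlus χ := (subfPlus_snce hs).1
  rw [mem_restrict_iff hs hXe] at hX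
  rw [mem_restrict_iff hφs hYe] at hφ
  rw [mem_restrict_iff hs hYe]
  have h1 : Fm.next (Fm.sprev (Fm.snce φ ψ)) ∈ Γ :=
    mcs_mp hΓ (mcs_thm hΓ (Deriv.ax (IsAxiom.fp (Fm.snce φ ψ)))) hX
  have h2 : Fm.sprev (Fm.snce φ ψ) ∈ Δ := hsub h1
  have hconj : φ.conj (Fm.sprev (Fm.snce φ ψ)) ∈ Δ :=
    mcs_mp hΔ (mcs_mp hΔ (mcs_thm hΔ (deriv_taut (taut_conj_intro φ _))) hφ) h2
  have hdisj : ψ.disj (φ.conj (Fm.sprev (Fm.snce φ ψ))) ∈ Δ :=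
    mcs_mp hΔ (mcs_thm hΔ (deriv_taut (taut_disj_r ψ _))) hconj
  exact mcs_mp hΔ (mcs_thm hΔ (deriv_biim_mpr (Deriv.ax (IsAxiom.snce2 φ ψ)))) hdisj

lemma mcsx_snce_zero (hX : X ∈ MCSx CS χ) (h0 : Fm.wprev Fm.bot ∈ X)
    (hψs : ψ ∈ Fm.subfPlus χ) (hs : Fm.snce φ ψ ∈ X) : ψ ∈ X := by
  set s := Fm.snce φ ψ with hsdef
  have d1 : Deriv CS ((Fm.wprev (Fm.bot : Fm Ag Const Var Atom)).imp (Fm.neg (Fm.sprev s))) :=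
    deriv_imp_trans (deriv_wprev_mono (deriv_taut (taut_bot_imp (Fm.neg s))))
      (deriv_taut (taut_dni (Fm.wprev (Fm.neg s))))
  have hns : DerivFrom CS X (Fm.neg (Fm.sprev s)) :=
    derivFrom_mp (derivFrom_of_deriv d1) (derivFrom_mem h0)
  have hdisj : DerivFrom CS X (ψ.disj (φ.conj (Fm.sprev s))) :=
    derivFrom_mp (derivFrom_of_deriv (deriv_biim_mp (Deriv.ax (IsAxiom.snce2 φ ψ))))
      (derivFrom_mem hs)
  have hd : DerivFrom CS X ψ :=
    derivFrom_mp (derivFrom_mp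
      (derivFrom_of_deriv (deriv_taut (taut_disj_conj_neg ψ φ (Fm.sprev s)))) hdisj) hns
  exact mcsx_closed hX hψs hd

lemma rnext_snce_back (hR : Rnext CS χ X Y) (hs : Fm.snce φ ψ ∈ Fm.subfPlus χ)
    (hY : Fm.snce φ ψ ∈ Y) :
    ψ ∈ Y ∨ (φ ∈ Y ∧ Fm.snce φ ψ ∈ X) := by
  obtain ⟨Γ, hΓ, Δ, hΔ, hXe, hYe, hsub⟩ := hR
  have hφs : φ ∈ Fm.subfPlus χ := (subfPlus_snce hs).1
  have hψs : ψ ∈ Fm.subfPlus χ := (subfPlus_snce hs).2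
  rw [mem_restrict_iff hs hYe] at hY
  set s := Fm.snce φ ψ with hsdef
  have hdisj : ψ.disj (φ.conj (Fm.sprev s)) ∈ Δ :=
    mcs_mp hΔ (mcs_thm hΔ (deriv_biim_mp (Deriv.ax (IsAxiom.snce2 φ ψ)))) hY
  by_cases hψΔ : ψ ∈ Δ
  · exact Or.inl ((mem_restrict_iff hψs hYe).2 hψΔ)
  · right
    have hnψ : Fm.neg ψ ∈ Δ := mcs_neg_of_not_mem hΔ hψΔ
    have hconj : φ.conj (Fm.sprev s) ∈ Δ :=
      mcs_mp hΔ (mcs_mp hΔ (mcs_thm hΔ (deriv_taut (taut_disj_elim_neg ψ _))) hdisj) hnψ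
    have hφΔ : φ ∈ Δ := mcs_mp hΔ (mcs_thm hΔ (deriv_taut (taut_conj_elim_l φ _))) hconj
    have hsprev : Fm.sprev s ∈ Δ :=
      mcs_mp hΔ (mcs_thm hΔ (deriv_taut (taut_conj_elim_r φ _))) hconj
    refine ⟨(mem_restrict_iff hφs hYe).2 hφΔ, (mem_restrict_iff hs hXe).2 ?_⟩
    by_contra hn
    have hns : Fm.neg s ∈ Γ := mcs_neg_of_not_mem hΓ hn
    have h1 : Fm.next (Fm.sprev (Fm.neg s)) ∈ Γ :=
      mcs_mp hΓ (mcs_thm hΓ (Deriv.ax (IsAxiom.fp (Fm.neg s)))) hns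
    have h2 : Fm.sprev (Fm.neg s) ∈ Δ := hsub h1
    have h3 : Fm.wprev (Fm.neg s) ∈ Δ :=
      mcs_mp hΔ (mcs_thm hΔ (Deriv.ax (IsAxiom.sw (Fm.neg s)))) h2
    exact mcs_not_both hΔ h3 hsprev

end TemporalLemmas


section RunLemmas

variable {χ φ ψ : Fm Ag Const Var Atom} {X : ℕ → Set (Fm Ag Const Var Atom)}

lemma acc_untl_back (hA : Acceptable CS χ X) (hu : Fm.untl φ ψ ∈ Fm.subfPlus χ) :
    ∀ d n, ψ ∈ X (n + d) → (∀ k, n ≤ k → k < n + d → φ ∈ X k) → Fm.untl φ ψ ∈ X n := by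
  intro d
  induction d with
  | zero => intro n hψ _; exact mcsx_untl_of_psi (hA.1 n) hu hψ
  | succ d ih =>
    intro n hψ hφ
    have he : n + (d + 1) = (n + 1) + d := by omega
    rw [he] at hψ
    have h1 : Fm.untl φ ψ ∈ X (n + 1) :=
      ih (n + 1) hψ (fun k h1 h2 => hφ k (by omega) (by omega))
    exact rnext_untl_step (hA.2.1 n) hu (hφ n le_rfl (by omega)) h1

lemma acc_snce_back (hA : Acceptable CS χ X) (hs : Fm.snce φ ψ ∈ Fm.subfPlus χ) :
    ∀ d m, ψ ∈ X m → (∀ k, m < k → k ≤ m + d → φ ∈ X k) → Fm.snce φ ψ ∈ X (m + d) := by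
  intro d
  induction d with
  | zero => intro m hψ _; exact mcsx_snce_of_psi (hA.1 m) hs hψ
  | succ d ih =>
    intro m hψ hφ
    have h1 : Fm.snce φ ψ ∈ X (m + d) :=
      ih m hψ (fun k h1 h2 => hφ k h1 (by omega))
    exact rnext_snce_step (hA.2.1 (m + d)) hs (hφ (m + d + 1) (by omega) (by omega)) h1

lemma acc_snce_fulfill (hA : Acceptable CS χ X) (hs : Fm.snce φ ψ ∈ Fm.subfPlus χ) :
    ∀ n, Fm.snce φ ψ ∈ X n →
      ∃ m, m ≤ n ∧ ψ ∈ X m ∧ ∀ k, m < k → k ≤ n → φ ∈ X k := by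
  intro n
  induction n with
  | zero =>
    intro h
    exact ⟨0, le_rfl, mcsx_snce_zero (hA.1 0) hA.2.2.2 (subfPlus_snce hs).2 h,
      fun k h1 h2 => absurd (h1.trans_le h2) (lt_irrefl 0)⟩
  | succ n ih =>
    intro h
    rcases rnext_snce_back (hA.2.1 n) hs h with hψ | ⟨hφ, hX⟩
    · exact ⟨n + 1, le_rfl, hψ, fun k h1 h2 => absurd (h1.trans_le h2) (lt_irrefl _)⟩
    · obtain ⟨m, hm, hψ, hk⟩ := ih hX
      refine ⟨m, hm.trans (Nat.le_succ n), hψ, fun k h1 h2 => ?_⟩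
      rcases eq_or_lt_of_le h2 with rfl | h2'
      · exact hφ
      · exact hk k h1 (by omega)

end RunLemmas

/-- Truth Lemma: in the χ-canonical F-interpreted system, a formula of
Subf⁺(χ) is true at a point (r, n) iff it belongs to the state r(n). -/
theorem truth_lemma (Ag Const Var Atom : Type)
    (CS : ConstSpec Ag Const Var Atom) (χ : Fm Ag Const Var Atom) :
    ∀ ψ ∈ Fm.subfPlus χ, ∀ r ∈ (canFQuasi CS χ).R, ∀ n : ℕ,
      ((canFQuasi CS χ).Sat ψ r n ↔ ψ ∈ (r n : Set (Fm Ag Const Var Atom))) := by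
  have main : ∀ ψ : Fm Ag Const Var Atom,
      ∀ r ∈ (canFQuasi CS χ).R, ∀ n : ℕ, ψ ∈ Fm.subfPlus χ →
      ((canFQuasi CS χ).Sat ψ r n ↔ ψ ∈ (r n : Set (Fm Ag Const Var Atom))) := by
    intro ψ
    induction ψ with
    | atom p =>
      intro r hr n hs
      exact Iff.rfl
    | bot =>
      intro r hr n hs
      have hA : Acceptable CS χ (fun k => ((r k : Set (Fm Ag Const Var Atom)))) := hr
      simp only [FQuasi.Sat]
      exact ⟨False.elim, fun h => mcsx_bot_not_mem (hA.1 n) h⟩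
    | imp a b iha ihb =>
      intro r hr n hs
      have hA : Acceptable CS χ (fun k => ((r k : Set (Fm Ag Const Var Atom)))) := hr
      obtain ⟨ha, hb⟩ := subfPlus_imp hs
      simp only [FQuasi.Sat]
      rw [iha r hr n ha, ihb r hr n hb]
      exact (mcsx_imp_iff (hA.1 n) hs ha hb).symm
    | next a iha =>
      intro r hr n hs
      have hA : Acceptable CS χ (fun k => ((r k : Set (Fm Ag Const Var Atom)))) := hr
      have has := subfPlus_next hs
      simp only [FQuasi.Sat]
      rw [iha r hr (n + 1) has]
      exact (rnext_next_iff (hA.2.1 n) hs has).symm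
    | wprev a iha =>
      intro r hr n hs
      have hA : Acceptable CS χ (fun k => ((r k : Set (Fm Ag Const Var Atom)))) := hr
      have has := subfPlus_wprev hs
      simp only [FQuasi.Sat]
      cases n with
      | zero =>
        constructor
        · intro _; exact mcsx_wprev_of_initial (hA.1 0) hA.2.2.2 hs
        · intro _; exact Or.inl rfl
      | succ n =>
        constructor
        · rintro (h | h)
          · exact absurd h (Nat.succ_ne_zero n)
          · exact (rnext_wprev_iff (hA.2.1 n) hs has).1 ((iha r hr n has).1 h)
        · intro h
          exact Or.inr ((iha r hr n has).2 ((rnext_wprev_iff (hA.2.1 n) hs has).2 h))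
    | untl a b iha ihb =>
      intro r hr n hs
      have hA : Acceptable CS χ (fun k => ((r k : Set (Fm Ag Const Var Atom)))) := hr
      obtain ⟨has, hbs⟩ := subfPlus_untl hs
      simp only [FQuasi.Sat]
      constructor
      · rintro ⟨m, hnm, hbm, hak⟩
        have hb' : b ∈ (r m : Set (Fm Ag Const Var Atom)) := (ihb r hr m hbs).1 hbm
        have ha' : ∀ k, n ≤ k → k < m → a ∈ (r k : Set (Fm Ag Const Var Atom)) :=
          fun k h1 h2 => (iha r hr k has).1 (hak k h1 h2)
        have hb'' : b ∈ (r (n + (m - n)) : Set (Fm Ag Const Var Atom)) := by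
          rwa [Nat.add_sub_cancel' hnm]
        exact acc_untl_back hA hs (m - n) n hb''
          (fun k h1 h2 => ha' k h1 (by omega))
      · intro h
        obtain ⟨m, hnm, hbm, hak⟩ := hA.2.2.1 n a b h
        exact ⟨m, hnm, (ihb r hr m hbs).2 hbm,
          fun k h1 h2 => (iha r hr k has).2 (hak k h1 h2)⟩
    | snce a b iha ihb =>
      intro r hr n hs
      have hA : Acceptable CS χ (fun k => ((r k : Set (Fm Ag Const Var Atom)))) := hr
      obtain ⟨has, hbs⟩ := subfPlus_snce hs
      simp only [FQuasi.Sat]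
      constructor
      · rintro ⟨m, hmn, hbm, hak⟩
        have hb' : b ∈ (r m : Set (Fm Ag Const Var Atom)) := (ihb r hr m hbs).1 hbm
        have ha' : ∀ k, m < k → k ≤ n → a ∈ (r k : Set (Fm Ag Const Var Atom)) :=
          fun k h1 h2 => (iha r hr k has).1 (hak k h1 h2)
        have := acc_snce_back hA hs (n - m) m hb'
          (fun k h1 h2 => ha' k h1 (by omega))
        rwa [Nat.add_sub_cancel' hmn] at this
      · intro h
        obtain ⟨m, hmn, hbm, hak⟩ := acc_snce_fulfill hA hs n h
        exact ⟨m, hmn, (ihb r hr m hbs).2 hbm,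
          fun k h1 h2 => (iha r hr k has).2 (hak k h1 h2)⟩
    | jbox i t a iha =>
      intro r hr n hs
      have hA : Acceptable CS χ (fun k => ((r k : Set (Fm Ag Const Var Atom)))) := hr
      have has := subfPlus_jbox hs
      simp only [FQuasi.Sat]
      constructor
      · rintro ⟨h1, _⟩
        obtain ⟨Γ, hΓ, hXe⟩ := mcsx_exists_mcs (hA.1 n)
        exact (mem_restrict_iff hs hXe).2 (h1 Γ hΓ hXe)
      · intro hmem
        refine ⟨fun Γ hΓ hXe => (mem_restrict_iff hs hXe).1 hmem, ?_⟩
        intro r' hr' n' hK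
        have hA' : Acceptable CS χ (fun k => ((r' k : Set (Fm Ag Const Var Atom)))) := hr'
        obtain ⟨Δ, hΔ, hYe⟩ := mcsx_exists_mcs (hA'.1 n')
        obtain ⟨Γ, hΓ, hXe, hsub⟩ := hK Δ hΔ hYe
        have hjΓ : Fm.jbox i t a ∈ Γ := (mem_restrict_iff hs hXe).1 hmem
        have haΔ : a ∈ Δ := hsub ⟨t, hjΓ⟩
        exact (iha r' hr' n' has).2 ((mem_restrict_iff has hYe).2 haΔ)
    | obox i t a iha =>
      intro r hr n hs
      have hA : Acceptable CS χ (fun k => ((r k : Set (Fm Ag Const Var Atom)))) := hr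
      have has := subfPlus_obox hs
      simp only [FQuasi.Sat]
      constructor
      · rintro ⟨h1, _⟩
        obtain ⟨Γ, hΓ, hXe⟩ := mcsx_exists_mcs (hA.1 n)
        exact (mem_restrict_iff hs hXe).2 (h1 Γ hΓ hXe)
      · intro hmem
        refine ⟨fun Γ hΓ hXe => (mem_restrict_iff hs hXe).1 hmem, ?_⟩
        intro r' hr' n' hK
        obtain ⟨Γ, hΓ, Δ, hΔ, hXe, hYe, hsub⟩ := hK
        have hoΓ : Fm.obox i t a ∈ Γ := (mem_restrict_iff hs hXe).1 hmem
        have haΔ : a ∈ Δ := hsub ⟨t, hoΓ⟩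
        exact (iha r' hr' n' has).2 ((mem_restrict_iff has hYe).2 haΔ)
  intro ψ hψ r hr n
  exact main ψ r hr n hψ

end JTO
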